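/- If w > 1 is real and satisfies both w^4 = w^2 + 1/w^2 - 2 cos θ and 1/w^8 = w^2 + 1/w^6 - (2/w^2) cos(π - 2θ) for some real θ, then w^14 - 2w^12 + 2w^10 - 2w^8 + 2w^2 - 1 = 0, and hence w^6 = w^2 + 1. -/

import Mathlib

theorem stmt_14 (w θ : ℝ) (hw : 1 < w)
    (h1 : w^4 = w^2 + 1/w^2 - 2 * Real.cos θ)
    (h2 : 1/w^8 = w^2 + 1/w^6 - (2/w^2) * Real.cos (Real.pi - 2*θ)) :
    w^14 - 2*w^12 + 2*w^10 - 2*w^8 + 2*w^2 - 1 = 0 ∧ w^6 = w^2 + 1 := by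
  have hw0 : w ≠ 0 := by positivity
  have hc : Real.cos θ = (w^2 + 1/w^2 - w^4)/2 := by linarith
  rw [Real.cos_pi_sub, Real.cos_two_mul, hc] at h2
  field_simp at h2
  have hP8 : (w^14 - 2*w^12 + 2*w^10 - 2*w^8 + 2*w^2 - 1) * (4*w^12) = 0 := by
    linear_combination (-4*w^12) * h2
  have hw12 : (4:ℝ)*w^12 ≠ 0 := by positivity
  have hP : w^14 - 2*w^12 + 2*w^10 - 2*w^8 + 2*w^2 - 1 = 0 :=
    (mul_eq_zero.mp hP8).resolve_right hw12
  refine ⟨hP, ?_⟩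
  have hfac : (w^6 - w^2 - 1) * ((w^2-1) * (w^6 - w^4 + 2*w^2 - 1)) = 0 := by
    linear_combination hP
  have hw1 : w^2 > 1 := by nlinarith
  have ha : w^2 - 1 > 0 := by linarith
  have hb : w^6 - w^4 + 2*w^2 - 1 > 0 := by nlinarith [pow_pos (by positivity : (0:ℝ) < w) 4]
  have hpos : (w^2-1) * (w^6 - w^4 + 2*w^2 - 1) > 0 := mul_pos ha hb
  have h := (mul_eq_zero.mp hfac).resolve_right (ne_of_gt hpos)
  linarith
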